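/- Linear-in-time position diameter bound and communication lower bound: let (x, v) be a solution of the ICS system on [0,∞) with sup_i(‖x_i(0)‖ + ‖v_i(0)‖) < ∞. Set a = sup_{i,j}‖x_i(0) − x_j(0)‖ and b = (∑_{k=1}^d D_v^(k)(0)²)^{1/2}. Then for all t ≥ 0: (i) sup_{i,j}‖x_i(t) − x_j(t)‖ ≤ a + b t, and (ii) inf_{i,j} ψ(‖x_j(t) − x_i(t)‖) ≥ ψ(a + b t). -/

import Mathlib

open Filter MeasureTheory
open scoped Topology

noncomputable section

/-- Componentwise sign-power map `Γ`. -/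
def Gam (d : ℕ) (α : ℝ) (v : EuclideanSpace ℝ (Fin d)) : EuclideanSpace ℝ (Fin d) :=
  WithLp.toLp 2 (fun k => Real.sign (v k) * |v k| ^ α)

/-- Right-hand side of the ICS velocity equation. -/
def icsRHS (d : ℕ) (κ α : ℝ) (m : ℕ → ℝ) (ψ : ℝ → ℝ)
    (x v : ℕ → ℝ → EuclideanSpace ℝ (Fin d)) (i : ℕ) (t : ℝ) :
    EuclideanSpace ℝ (Fin d) :=
  κ • ∑' j, (m j * ψ ‖x j t - x i t‖) • Gam d α (v j t - v i t)

/-- Solution of the infinite Cucker–Smale system on the set `s`, satisfying the ODE on `sInt`: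
uniform boundedness on compact subsets, continuity, `ẋᵢ = vᵢ`, and
`v̇ᵢ = κ ∑ⱼ mⱼ ψ(‖xⱼ-xᵢ‖) Γ(vⱼ-vᵢ)` with the series converging absolutely. -/
def IsICSSolOn (d : ℕ) (κ α : ℝ) (m : ℕ → ℝ) (ψ : ℝ → ℝ)
    (x v : ℕ → ℝ → EuclideanSpace ℝ (Fin d)) (s sInt : Set ℝ) : Prop :=
  (∀ K : Set ℝ, K ⊆ s → IsCompact K → ∃ C : ℝ, ∀ i, ∀ t ∈ K, ‖x i t‖ + ‖v i t‖ ≤ C) ∧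
  (∀ i, ContinuousOn (x i) s) ∧
  (∀ i, ContinuousOn (v i) s) ∧
  (∀ i, ∀ t ∈ sInt,
      HasDerivAt (x i) (v i t) t ∧
      Summable (fun j => ‖(m j * ψ ‖x j t - x i t‖) • Gam d α (v j t - v i t)‖) ∧
      HasDerivAt (v i) (icsRHS d κ α m ψ x v i t) t)

/-- Upper right Dini derivative `D⁺f(t) = limsup_{h→0⁺} (f(t+h)-f(t))/h`. -/
def diniUR (f : ℝ → ℝ) (t : ℝ) : ℝ :=
  limsup (fun h => (f (t + h) - f t) / h) (𝓝[>] (0 : ℝ))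

/-- Lower right Dini derivative `D⁻f(t) = liminf_{h→0⁺} (f(t+h)-f(t))/h`. -/
def diniLR (f : ℝ → ℝ) (t : ℝ) : ℝ :=
  liminf (fun h => (f (t + h) - f t) / h) (𝓝[>] (0 : ℝ))

/-- `M^(k)(t) = sup_i v_i^k(t)`. -/
def Msup (d : ℕ) (v : ℕ → ℝ → EuclideanSpace ℝ (Fin d)) (k : Fin d) (t : ℝ) : ℝ :=
  ⨆ i, v i t k

/-- `m^(k)(t) = inf_i v_i^k(t)`. -/
def minf (d : ℕ) (v : ℕ → ℝ → EuclideanSpace ℝ (Fin d)) (k : Fin d) (t : ℝ) : ℝ :=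
  ⨅ i, v i t k

/-- Component velocity diameter `D_v^(k)(t) = M^(k)(t) - m^(k)(t)`. -/
def Dv (d : ℕ) (v : ℕ → ℝ → EuclideanSpace ℝ (Fin d)) (k : Fin d) (t : ℝ) : ℝ :=
  Msup d v k t - minf d v k t

/-- Position diameter `D_x(t) = sup_{i,j} ‖x_i(t) - x_j(t)‖`. -/
def Dx (d : ℕ) (x : ℕ → ℝ → EuclideanSpace ℝ (Fin d)) (t : ℝ) : ℝ :=
  ⨆ p : ℕ × ℕ, ‖x p.1 t - x p.2 t‖

/-- Weighted `ℓ²_m` seminorm. -/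
def wnorm (d : ℕ) (m : ℕ → ℝ) (u : ℕ → EuclideanSpace ℝ (Fin d)) : ℝ :=
  Real.sqrt (∑' i, m i * ‖u i‖ ^ 2)

lemma abs_apply_le_norm {d : ℕ} (u : EuclideanSpace ℝ (Fin d)) (k : Fin d) : |u k| ≤ ‖u‖ := by
  rw [EuclideanSpace.norm_eq, ← Real.sqrt_sq_eq_abs]
  apply Real.sqrt_le_sqrt
  calc (u k)^2 = ‖u k‖^2 := by rw [Real.norm_eq_abs, sq_abs]
  _ ≤ ∑ i, ‖u i‖^2 := Finset.single_le_sum (f := fun i => ‖u i‖^2) (fun i _ => sq_nonneg _) (Finset.mem_univ k)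

lemma Gam_neg (d : ℕ) (α : ℝ) (u : EuclideanSpace ℝ (Fin d)) : Gam d α (-u) = -Gam d α u := by
  ext k
  show Real.sign ((-u) k) * |(-u) k| ^ α = -(Real.sign (u k) * |u k| ^ α)
  rw [PiLp.neg_apply, Real.sign_neg, abs_neg]; ring

lemma icsRHS_neg (d : ℕ) (κ α : ℝ) (m : ℕ → ℝ) (ψ : ℝ → ℝ)
    (x v : ℕ → ℝ → EuclideanSpace ℝ (Fin d)) (i : ℕ) (t : ℝ) :
    icsRHS d κ α m ψ (fun i t => -(x i t)) (fun i t => -(v i t)) i t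
      = -(icsRHS d κ α m ψ x v i t) := by
  unfold icsRHS
  rw [← smul_neg, ← tsum_neg]
  congr 1
  apply tsum_congr
  intro j
  rw [neg_sub_neg, neg_sub_neg, norm_sub_rev (x i t),
    show v i t - v j t = -(v j t - v i t) by abel, Gam_neg, smul_neg]

lemma isICSSolOn_neg {d : ℕ} {κ α : ℝ} {m : ℕ → ℝ} {ψ : ℝ → ℝ}
    {x v : ℕ → ℝ → EuclideanSpace ℝ (Fin d)} {s sInt : Set ℝ}
    (hsol : IsICSSolOn d κ α m ψ x v s sInt) :
    IsICSSolOn d κ α m ψ (fun i t => -(x i t)) (fun i t => -(v i t)) s sInt := by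
  obtain ⟨h1, h2, h3, h4⟩ := hsol
  refine ⟨fun K hK hKc => ?_, fun i => (h2 i).neg, fun i => (h3 i).neg, fun i t ht => ?_⟩
  · obtain ⟨C, hC⟩ := h1 K hK hKc
    exact ⟨C, fun i t ht => by simpa [norm_neg] using hC i t ht⟩
  · obtain ⟨hx, hs, hv⟩ := h4 i t ht
    have hterm : ∀ j, ‖(m j * ψ ‖(-(x j t)) - (-(x i t))‖) • Gam d α ((-(v j t)) - (-(v i t)))‖
        = ‖(m j * ψ ‖x j t - x i t‖) • Gam d α (v j t - v i t)‖ := fun j => by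
      rw [neg_sub_neg, neg_sub_neg, norm_sub_rev (x i t),
        show v i t - v j t = -(v j t - v i t) by abel, Gam_neg, smul_neg, norm_neg]
    refine ⟨hx.neg, hs.congr fun j => (hterm j).symm, ?_⟩
    rw [icsRHS_neg]
    exact hv.neg

set_option maxHeartbeats 1000000 in
lemma maxPrin (d : ℕ) (κ : ℝ) (hκ : 0 < κ) (α : ℝ) (hα0 : 0 < α)
    (m : ℕ → ℝ) (hm0 : ∀ j, 0 ≤ m j) (hmS : Summable m) (hm1 : ∑' j, m j = 1)
    (ψ : ℝ → ℝ) (hψanti : AntitoneOn ψ (Set.Ici 0)) (hψ0 : ψ 0 = 1)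
    (hψnn : ∀ r, 0 ≤ r → 0 ≤ ψ r)
    (x v : ℕ → ℝ → EuclideanSpace ℝ (Fin d))
    (hsol : IsICSSolOn d κ α m ψ x v (Set.Ici 0) (Set.Ioi 0))
    (k : Fin d) (t : ℝ) (ht : 0 ≤ t) (i : ℕ) :
    v i t k ≤ ⨆ j, v j 0 k := by
  obtain ⟨h1, hxc, hvc, hode⟩ := hsol
  obtain ⟨C, hC⟩ := h1 (Set.Icc 0 t) (fun s hs => hs.1) isCompact_Icc
  set w : ℕ → ℝ → ℝ := fun i s => v i s k with hw
  have hwC : ∀ j, ∀ s ∈ Set.Icc (0:ℝ) t, |w j s| ≤ C := by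
    intro j s hs
    calc |w j s| ≤ ‖v j s‖ := abs_apply_le_norm _ _
    _ ≤ C := by have h := hC j s hs; have h2 := norm_nonneg (x j s); linarith
  have hC0 : 0 ≤ C := le_trans (abs_nonneg _) (hwC 0 0 ⟨le_refl _, ht⟩)
  have hbdd : ∀ s ∈ Set.Icc (0:ℝ) t, BddAbove (Set.range fun j => w j s) :=
    fun s hs => ⟨C, by rintro y ⟨j, rfl⟩; exact le_trans (le_abs_self _) (hwC j s hs)⟩
  have hwS : ∀ j, ∀ s ∈ Set.Icc (0:ℝ) t, w j s ≤ ⨆ l, w l s :=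
    fun j s hs => le_ciSup (hbdd s hs) j
  rcases eq_or_lt_of_le ht with rfl | htpos
  · exact hwS i 0 ⟨le_refl _, le_refl _⟩
  have hψle1 : ∀ r, 0 ≤ r → ψ r ≤ 1 := fun r hr =>
    le_of_le_of_eq (hψanti Set.self_mem_Ici hr hr) hψ0
  -- derivative of components
  have hderiv : ∀ j, ∀ s ∈ Set.Ioc (0:ℝ) t,
      HasDerivAt (w j) ((icsRHS d κ α m ψ x v j s) k) s := by
    intro j s hs
    have h := (hode j s hs.1).2.2
    have h2 := (EuclideanSpace.proj (𝕜 := ℝ) k).hasFDerivAt.comp_hasDerivAt s h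
    simp only [hw]
    exact h2
  -- component formula
  have hcomp : ∀ j s, s ∈ Set.Ioc (0:ℝ) t →
      (icsRHS d κ α m ψ x v j s) k
        = κ * ∑' l, (m l * ψ ‖x l s - x j s‖) * (Gam d α (v l s - v j s) k) := by
    intro j s hs
    have hsum : Summable (fun l => (m l * ψ ‖x l s - x j s‖) • Gam d α (v l s - v j s)) :=
      Summable.of_norm (hode j s hs.1).2.1
    have h2' : (∑' l, (m l * ψ ‖x l s - x j s‖) • Gam d α (v l s - v j s)) k
        = ∑' l, (m l * ψ ‖x l s - x j s‖) * (Gam d α (v l s - v j s) k) := by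
      have h2 := (EuclideanSpace.proj (𝕜 := ℝ) k).map_tsum hsum
      simpa [smul_eq_mul] using h2
    show (κ • (∑' l, (m l * ψ ‖x l s - x j s‖) • Gam d α (v l s - v j s))) k = _
    rw [PiLp.smul_apply, smul_eq_mul, h2']
  have hsumk : ∀ j s, s ∈ Set.Ioc (0:ℝ) t →
      Summable (fun l => (m l * ψ ‖x l s - x j s‖) * (Gam d α (v l s - v j s) k)) := by
    intro j s hs
    apply Summable.of_norm_bounded ((hode j s hs.1).2.1)
    intro l
    rw [Real.norm_eq_abs]
    calc |(m l * ψ ‖x l s - x j s‖) * Gam d α (v l s - v j s) k|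
        = |((m l * ψ ‖x l s - x j s‖) • Gam d α (v l s - v j s)) k| := by
          rw [PiLp.smul_apply, smul_eq_mul]
      _ ≤ ‖(m l * ψ ‖x l s - x j s‖) • Gam d α (v l s - v j s)‖ := abs_apply_le_norm _ _
  -- sign * power bound
  have hsgn : ∀ q p : ℝ, q ≤ p → 0 ≤ p → Real.sign q * |q| ^ α ≤ p ^ α := by
    intro q p hqp hp
    rcases le_or_gt q 0 with hq | hq
    · have h1 : Real.sign q ≤ 0 := by
        rcases hq.lt_or_eq with h | h
        · rw [Real.sign_of_neg h]; norm_num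
        · rw [h, Real.sign_zero]
      exact le_trans (mul_nonpos_of_nonpos_of_nonneg h1 (Real.rpow_nonneg (abs_nonneg q) α))
        (Real.rpow_nonneg hp α)
    · rw [Real.sign_of_pos hq, one_mul, abs_of_pos hq]
      exact Real.rpow_le_rpow hq.le hqp hα0.le
  -- one-sided derivative bound
  have hRHS_le : ∀ j s, s ∈ Set.Ioc (0:ℝ) t →
      (icsRHS d κ α m ψ x v j s) k ≤ κ * ((⨆ l, w l s) - w j s) ^ α := by
    intro j s hs
    rw [hcomp j s hs]
    have hsmem : s ∈ Set.Icc (0:ℝ) t := ⟨hs.1.le, hs.2⟩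
    have hp : 0 ≤ (⨆ l, w l s) - w j s := sub_nonneg.2 (hwS j s hsmem)
    have hterm : ∀ l, (m l * ψ ‖x l s - x j s‖) * (Gam d α (v l s - v j s) k)
        ≤ m l * ((⨆ l, w l s) - w j s) ^ α := by
      intro l
      have hψl : ψ ‖x l s - x j s‖ ≤ 1 := hψle1 _ (norm_nonneg _)
      have hψl0 : 0 ≤ ψ ‖x l s - x j s‖ := hψnn _ (norm_nonneg _)
      have hG : Gam d α (v l s - v j s) k ≤ ((⨆ l, w l s) - w j s) ^ α := by
        have hq : (v l s - v j s) k = w l s - w j s := by rw [PiLp.sub_apply]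
        show Real.sign ((v l s - v j s) k) * |(v l s - v j s) k| ^ α ≤ _
        rw [hq]
        exact hsgn _ _ (by have := hwS l s hsmem; linarith) hp
      rcases le_or_gt (Gam d α (v l s - v j s) k) 0 with h | h
      · exact le_trans
          (mul_nonpos_of_nonneg_of_nonpos (mul_nonneg (hm0 l) hψl0) h)
          (mul_nonneg (hm0 l) (Real.rpow_nonneg hp α))
      · calc (m l * ψ ‖x l s - x j s‖) * Gam d α (v l s - v j s) k
            ≤ (m l * 1) * Gam d α (v l s - v j s) k :=
              mul_le_mul_of_nonneg_right (mul_le_mul_of_nonneg_left hψl (hm0 l)) h.le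
        _ = m l * Gam d α (v l s - v j s) k := by ring
        _ ≤ m l * ((⨆ l, w l s) - w j s) ^ α := mul_le_mul_of_nonneg_left hG (hm0 l)
    have h2 := Summable.tsum_le_tsum hterm (hsumk j s hs) (hmS.mul_right _)
    calc κ * ∑' l, (m l * ψ ‖x l s - x j s‖) * (Gam d α (v l s - v j s) k)
        ≤ κ * ∑' l, m l * ((⨆ l, w l s) - w j s) ^ α := mul_le_mul_of_nonneg_left h2 hκ.le
    _ = κ * ((⨆ l, w l s) - w j s) ^ α := by rw [tsum_mul_right, hm1, one_mul]
  -- absolute derivative bound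
  set B : ℝ := κ * (2*C)^α with hBdef
  have hBnn : 0 ≤ B := mul_nonneg hκ.le (Real.rpow_nonneg (by linarith) α)
  have hRHS_abs : ∀ j s, s ∈ Set.Ioc (0:ℝ) t → |(icsRHS d κ α m ψ x v j s) k| ≤ B := by
    intro j s hs
    have hsmem : s ∈ Set.Icc (0:ℝ) t := ⟨hs.1.le, hs.2⟩
    rw [hcomp j s hs, abs_mul, abs_of_nonneg hκ.le]
    have habs : ∀ l, |(m l * ψ ‖x l s - x j s‖) * (Gam d α (v l s - v j s) k)|
        ≤ m l * (2*C)^α := by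
      intro l
      rw [abs_mul]
      have h1 : |m l * ψ ‖x l s - x j s‖| ≤ m l := by
        rw [abs_of_nonneg (mul_nonneg (hm0 l) (hψnn _ (norm_nonneg _)))]
        calc m l * ψ ‖x l s - x j s‖ ≤ m l * 1 :=
              mul_le_mul_of_nonneg_left (hψle1 _ (norm_nonneg _)) (hm0 l)
        _ = m l := mul_one _
      have h2 : |Gam d α (v l s - v j s) k| ≤ (2*C)^α := by
        show |Real.sign ((v l s - v j s) k) * |(v l s - v j s) k| ^ α| ≤ _
        rw [abs_mul]
        have hsb : |Real.sign ((v l s - v j s) k)| ≤ 1 := by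
          rcases Real.sign_apply_eq ((v l s - v j s) k) with h | h | h <;> rw [h] <;> norm_num
        have h3 : |(|(v l s - v j s) k| ^ α)| ≤ (2*C)^α := by
          rw [abs_of_nonneg (Real.rpow_nonneg (abs_nonneg _) α)]
          apply Real.rpow_le_rpow (abs_nonneg _) _ hα0.le
          have hq : (v l s - v j s) k = w l s - w j s := by rw [PiLp.sub_apply]
          rw [hq]
          calc |w l s - w j s| ≤ |w l s| + |w j s| := abs_sub _ _
          _ ≤ 2*C := by have := hwC l s hsmem; have := hwC j s hsmem; linarith
        calc |Real.sign ((v l s - v j s) k)| * |(|(v l s - v j s) k| ^ α)|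
            ≤ 1 * |(|(v l s - v j s) k| ^ α)| :=
              mul_le_mul_of_nonneg_right hsb (abs_nonneg _)
        _ = |(|(v l s - v j s) k| ^ α)| := one_mul _
        _ ≤ (2*C)^α := h3
      calc |m l * ψ ‖x l s - x j s‖| * |Gam d α (v l s - v j s) k|
          ≤ m l * |Gam d α (v l s - v j s) k| :=
            mul_le_mul_of_nonneg_right h1 (abs_nonneg _)
      _ ≤ m l * (2*C)^α := mul_le_mul_of_nonneg_left h2 (hm0 l)
    have hsa : Summable (fun l => |(m l * ψ ‖x l s - x j s‖) * (Gam d α (v l s - v j s) k)|) := by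
      apply Summable.of_nonneg_of_le (fun l => abs_nonneg _) habs (hmS.mul_right _)
    have h3 : |∑' l, (m l * ψ ‖x l s - x j s‖) * (Gam d α (v l s - v j s) k)|
        ≤ ∑' l, |(m l * ψ ‖x l s - x j s‖) * (Gam d α (v l s - v j s) k)| := by
      simpa only [Real.norm_eq_abs] using
        norm_tsum_le_tsum_norm (f := fun l => (m l * ψ ‖x l s - x j s‖) * (Gam d α (v l s - v j s) k))
          (by simpa only [Real.norm_eq_abs] using hsa)
    have h4 : ∑' l, |(m l * ψ ‖x l s - x j s‖) * (Gam d α (v l s - v j s) k)|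
        ≤ ∑' l, m l * (2*C)^α := Summable.tsum_le_tsum habs hsa (hmS.mul_right _)
    have h5 : ∑' l, m l * (2*C)^α = (2*C)^α := by rw [tsum_mul_right, hm1, one_mul]
    rw [hBdef]
    have := le_trans h3 (le_of_le_of_eq h4 h5)
    exact mul_le_mul_of_nonneg_left this hκ.le
  -- uniform Lipschitz bound on (0, t]
  have hwLip : ∀ j s1 s2, 0 < s1 → s1 ≤ s2 → s2 ≤ t → |w j s2 - w j s1| ≤ B * (s2 - s1) := by
    intro j s1 s2 h1 h12 h2t
    have key := Convex.norm_image_sub_le_of_norm_hasDerivWithin_le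
      (f := w j) (f' := fun s => (icsRHS d κ α m ψ x v j s) k) (s := Set.Icc s1 s2) (C := B)
      (fun r hr => (hderiv j r ⟨lt_of_lt_of_le h1 hr.1, le_trans hr.2 h2t⟩).hasDerivWithinAt)
      (fun r hr => by
        rw [Real.norm_eq_abs]
        exact hRHS_abs j r ⟨lt_of_lt_of_le h1 hr.1, le_trans hr.2 h2t⟩)
      (convex_Icc s1 s2) (Set.left_mem_Icc.2 h12) (Set.right_mem_Icc.2 h12)
    rw [Real.norm_eq_abs, Real.norm_eq_abs, abs_of_nonneg (by linarith : (0:ℝ) ≤ s2 - s1)] at key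
    exact key
  -- sup reverse Lipschitz
  have hSlip : ∀ s1 s2, 0 < s1 → s1 ≤ s2 → s2 ≤ t →
      (⨆ l, w l s1) ≤ (⨆ l, w l s2) + B * (s2 - s1) := by
    intro s1 s2 h1 h12 h2t
    apply ciSup_le
    intro j
    have h := abs_le.1 (hwLip j s1 s2 h1 h12 h2t)
    have h2 := hwS j s2 ⟨by linarith, h2t⟩
    linarith [h.1]
  -- one-step estimate
  have hstep : ∀ δ : ℝ, 0 < δ → ∀ s1 s2, 0 < s1 → s1 ≤ s2 → s2 ≤ t →
      (⨆ l, w l s2) ≤ (⨆ l, w l s1) + δ + κ * (δ + 2*B*(s2-s1)) ^ α * (s2 - s1) := by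
    intro δ hδ s1 s2 h1 h12 h2t
    have h1mem : s1 ∈ Set.Icc (0:ℝ) t := ⟨h1.le, le_trans h12 h2t⟩
    have h2mem : s2 ∈ Set.Icc (0:ℝ) t := ⟨by linarith, h2t⟩
    obtain ⟨j, hj⟩ : ∃ j, (⨆ l, w l s2) - δ < w j s2 :=
      exists_lt_of_lt_ciSup (by linarith : (⨆ l, w l s2) - δ < ⨆ l, w l s2)
    set c : ℝ := κ * (δ + 2*B*(s2-s1)) ^ α with hc
    have hcnn : 0 ≤ c := mul_nonneg hκ.le (Real.rpow_nonneg (by nlinarith) α)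
    -- derivative bound for j on Ioo s1 s2
    have hkey : ∀ r ∈ Set.Ioo s1 s2, (icsRHS d κ α m ψ x v j r) k ≤ c := by
      intro r hr
      have hrIoc : r ∈ Set.Ioc (0:ℝ) t := ⟨lt_trans h1 hr.1, le_trans hr.2.le h2t⟩
      have hle := hRHS_le j r hrIoc
      have hrmem : r ∈ Set.Icc (0:ℝ) t := ⟨hrIoc.1.le, hrIoc.2⟩
      have hS2 : (⨆ l, w l r) ≤ (⨆ l, w l s2) + B * (s2 - r) := hSlip r s2 hrIoc.1 hr.2.le h2t
      have hwj : |w j s2 - w j r| ≤ B * (s2 - r) := hwLip j r s2 hrIoc.1 hr.2.le h2t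
      have hwj2 := (abs_le.1 hwj).2
      have hub : (⨆ l, w l r) - w j r ≤ δ + 2*B*(s2-s1) := by
        have hr2 : B * (s2 - r) ≤ B * (s2 - s1) := by
          apply mul_le_mul_of_nonneg_left _ hBnn
          linarith [hr.1]
        linarith
      have hnn : 0 ≤ (⨆ l, w l r) - w j r := sub_nonneg.2 (hwS j r hrmem)
      calc (icsRHS d κ α m ψ x v j r) k ≤ κ * ((⨆ l, w l r) - w j r) ^ α := hle
      _ ≤ κ * (δ + 2*B*(s2-s1)) ^ α :=
          mul_le_mul_of_nonneg_left (Real.rpow_le_rpow hnn hub hα0.le) hκ.le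
    -- monotone barrier
    have hanti : AntitoneOn (fun r => w j r - r * c) (Set.Icc s1 s2) := by
      apply antitoneOn_of_deriv_nonpos (convex_Icc s1 s2)
      · apply ContinuousOn.sub
        · have hcont : ContinuousOn (w j) (Set.Ici 0) := by
            simp only [hw]
            exact (EuclideanSpace.proj (𝕜 := ℝ) k).continuous.comp_continuousOn (hvc j)
          exact hcont.mono (fun r hr => le_trans h1.le hr.1)
        · exact (continuous_id.mul continuous_const).continuousOn
      · intro r hr
        rw [interior_Icc] at hr
        have hd := (hderiv j r ⟨lt_trans h1 hr.1, le_trans hr.2.le h2t⟩).sub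
          (hasDerivAt_mul_const c)
        exact hd.differentiableAt.differentiableWithinAt
      · intro r hr
        rw [interior_Icc] at hr
        have hd := (hderiv j r ⟨lt_trans h1 hr.1, le_trans hr.2.le h2t⟩).sub
          (hasDerivAt_mul_const c)
        rw [(show HasDerivAt (fun r => w j r - r * c) _ r from hd).deriv]
        have := hkey r hr
        linarith
    have hg := hanti (Set.left_mem_Icc.2 h12) (Set.right_mem_Icc.2 h12) h12
    have hwjs1 := hwS j s1 h1mem
    have hthis : w j s2 ≤ (⨆ l, w l s1) + c * (s2 - s1) := by
      simp only at hg
      nlinarith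
    rw [hc] at hthis
    nlinarith
  -- iteration
  have hiter : ∀ (n : ℕ), n ≠ 0 → ∀ δ : ℝ, 0 < δ → ∀ s1, 0 < s1 → s1 ≤ t →
      ∀ jj : ℕ, jj ≤ n →
      (⨆ l, w l (s1 + jj * ((t - s1)/n)))
        ≤ (⨆ l, w l s1) + jj * (δ + κ * (δ + 2*B*((t - s1)/n)) ^ α * ((t - s1)/n)) := by
    intro n hn δ hδ s1 hs1 hs1t jj
    set η : ℝ := (t - s1)/n with hη
    have hηnn : 0 ≤ η := div_nonneg (by linarith) (Nat.cast_nonneg n)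
    have hnne : (n:ℝ) ≠ 0 := Nat.cast_ne_zero.2 hn
    have hnη : (n:ℝ) * η = t - s1 := by rw [hη]; field_simp
    induction jj with
    | zero => intro _; simp
    | succ p ih =>
      intro hle
      have hp : p ≤ n := by omega
      have hple : (p:ℝ) + 1 ≤ (n:ℝ) := by exact_mod_cast hle
      have hppos : 0 < s1 + p * η := by positivity
      have hsub : s1 + p * η ≤ s1 + ((p:ℝ)+1) * η := by nlinarith
      have hub : s1 + ((p:ℝ)+1) * η ≤ t := by nlinarith
      have key := hstep δ hδ (s1 + p * η) (s1 + ((p:ℝ)+1) * η) hppos hsub hub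
      have harg : s1 + ((p:ℝ)+1) * η - (s1 + p * η) = η := by ring
      rw [harg] at key
      have ihp := ih hp
      have hcast : ((p:ℝ)+1) = ((p+1 : ℕ) : ℝ) := by push_cast; ring
      calc (⨆ l, w l (s1 + ((p+1:ℕ):ℝ) * η)) = (⨆ l, w l (s1 + ((p:ℝ)+1) * η)) := by
            rw [← hcast]
      _ ≤ (⨆ l, w l (s1 + p * η)) + δ + κ * (δ + 2*B*η) ^ α * η := key
      _ ≤ (⨆ l, w l s1) + p * (δ + κ * (δ + 2*B*η) ^ α * η) + (δ + κ * (δ + 2*B*η) ^ α * η) := by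
            linarith
      _ = (⨆ l, w l s1) + ((p+1:ℕ):ℝ) * (δ + κ * (δ + 2*B*η) ^ α * η) := by
            rw [← hcast]; ring
  -- monotonicity of sup on (0, t]
  have hmono : ∀ s1, 0 < s1 → s1 ≤ t → (⨆ l, w l t) ≤ ⨆ l, w l s1 := by
    intro s1 hs1 hs1t
    apply le_of_forall_pos_le_add
    intro ε hε
    set c0 : ℝ := ε/2 + 2*B*(t - s1) with hc0
    have h2B : 0 ≤ 2*B*(t - s1) := mul_nonneg (mul_nonneg (by norm_num) hBnn) (by linarith)
    have hc0pos : 0 < c0 := by rw [hc0]; linarith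
    set K : ℝ := κ * (t - s1) with hK
    have hKnn : 0 ≤ K := mul_nonneg hκ.le (by linarith)
    set γ : ℝ := (ε/(2*(K+1))) ^ (α⁻¹) with hγ
    have hγpos : 0 < γ := Real.rpow_pos_of_pos (by positivity) _
    obtain ⟨n0, hn0⟩ := exists_nat_ge (c0/γ)
    set n : ℕ := n0 + 1 with hn
    have hnpos : 0 < (n:ℝ) := by rw [hn]; push_cast; positivity
    have hnge : c0/γ ≤ (n:ℝ) := le_trans hn0 (by rw [hn]; push_cast; linarith)
    have hcn : c0/(n:ℝ) ≤ γ := by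
      rw [div_le_iff₀ hnpos]
      rw [div_le_iff₀ hγpos] at hnge
      linarith
    set δ : ℝ := ε/(2*n) with hδdef
    have hδpos : 0 < δ := by rw [hδdef]; positivity
    set η : ℝ := (t - s1)/n with hη
    have hηnn : 0 ≤ η := div_nonneg (by linarith) hnpos.le
    have key := hiter n (by omega) δ hδpos s1 hs1 hs1t n (le_refl n)
    have hs1n : s1 + (n:ℝ) * η = t := by rw [hη]; field_simp; ring
    rw [hs1n] at key
    have h2 : δ + 2*B*η = c0/n := by
      rw [hδdef, hη, hc0]
      field_simp
    have h4 : (c0/(n:ℝ))^α ≤ ε/(2*(K+1)) := by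
      have hle := Real.rpow_le_rpow (by positivity : (0:ℝ) ≤ c0/(n:ℝ)) hcn hα0.le
      rwa [hγ, Real.rpow_inv_rpow (by positivity) hα0.ne'] at hle
    have h5 : (n:ℝ) * (δ + κ * (δ + 2*B*η) ^ α * η) ≤ ε := by
      rw [h2]
      have hη2 : (n:ℝ) * η = t - s1 := by rw [hη]; field_simp
      have hnδ : (n:ℝ) * δ = ε/2 := by rw [hδdef]; field_simp
      have hKb : K * (c0/(n:ℝ))^α ≤ ε/2 := by
        calc K * (c0/(n:ℝ))^α ≤ K * (ε/(2*(K+1))) := mul_le_mul_of_nonneg_left h4 hKnn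
        _ ≤ ε/2 := by
          rw [mul_comm, div_mul_eq_mul_div,
            div_le_div_iff₀ (by positivity : (0:ℝ) < 2*(K+1)) (by norm_num : (0:ℝ) < 2)]
          nlinarith
      have hexp : (n:ℝ) * (δ + κ * (c0/(n:ℝ)) ^ α * η) = (n:ℝ)*δ + K * (c0/(n:ℝ))^α := by
        rw [hK]
        calc (n:ℝ) * (δ + κ * (c0/(n:ℝ)) ^ α * η) = (n:ℝ)*δ + κ * ((n:ℝ)*η) * (c0/(n:ℝ))^α := by ring
        _ = (n:ℝ)*δ + κ * (t-s1) * (c0/(n:ℝ))^α := by rw [hη2]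
      rw [hexp, hnδ]
      linarith
    linarith
  -- extend to 0 and conclude
  have hw0 : ∀ j s, 0 < s → s ≤ t → w j s ≤ w j 0 + B * s := by
    intro j s hs hst
    have hcw : ContinuousWithinAt (w j) (Set.Ici 0) 0 := by
      have hcont : ContinuousOn (w j) (Set.Ici 0) := by
        simp only [hw]
        exact (EuclideanSpace.proj (𝕜 := ℝ) k).continuous.comp_continuousOn (hvc j)
      exact hcont.continuousWithinAt Set.self_mem_Ici
    have h1 : Tendsto (w j) (𝓝[>] (0:ℝ)) (𝓝 (w j 0)) :=
      hcw.tendsto.mono_left (nhdsWithin_mono 0 Set.Ioi_subset_Ici_self)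
    have h3 : Tendsto (fun s' : ℝ => B * (s - s')) (𝓝[>] (0:ℝ)) (𝓝 (B * (s - 0))) :=
      ((continuous_const.mul (continuous_const.sub continuous_id)).tendsto 0).mono_left
        nhdsWithin_le_nhds
    have hlim : Tendsto (fun s' => w j s' + B * (s - s')) (𝓝[>] (0:ℝ)) (𝓝 (w j 0 + B * s)) := by
      have := h1.add h3
      simpa using this
    apply ge_of_tendsto hlim
    filter_upwards [Ioo_mem_nhdsGT_of_mem (Set.left_mem_Ico.2 hs)] with s' hs'
    have h := (abs_le.1 (hwLip j s' s hs'.1 hs'.2.le hst)).2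
    linarith
  have hS0 : ∀ s, 0 < s → s ≤ t → (⨆ l, w l s) ≤ (⨆ l, w l 0) + B * s := by
    intro s hs hst
    apply ciSup_le
    intro j
    have h1 := hw0 j s hs hst
    have h2 := hwS j 0 ⟨le_refl _, ht⟩
    linarith
  have hfin : (⨆ l, w l t) ≤ ⨆ l, w l 0 := by
    apply le_of_forall_pos_le_add
    intro ε hε
    set s : ℝ := min t (ε/(B+1)) with hs
    have hspos : 0 < s := lt_min htpos (by positivity)
    have hst : s ≤ t := min_le_left _ _
    have h1 := hmono s hspos hst
    have h2 := hS0 s hspos hst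
    have h3 : B * s ≤ ε := by
      calc B * s ≤ B * (ε/(B+1)) := mul_le_mul_of_nonneg_left (min_le_right _ _) hBnn
      _ ≤ ε := by
        rw [← mul_div_assoc, div_le_iff₀ (by positivity : (0:ℝ) < B+1)]
        nlinarith
    linarith
  have hfinal := le_trans (hwS i t ⟨ht, le_refl t⟩) hfin
  simpa only [hw] using hfinal

set_option maxHeartbeats 1000000 in
/-- Linear-in-time position diameter bound
`sup_{i,j}‖x_i(t)−x_j(t)‖ ≤ a + b t` and the communication lower bound
`inf_{i,j} ψ(‖x_j(t)−x_i(t)‖) ≥ ψ(a + b t)`. -/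
theorem stmt7 (d : ℕ) (hd : 1 ≤ d) (κ : ℝ) (hκ : 0 < κ) (α : ℝ) (hα0 : 0 < α) (hα1 : α < 1)
    (m : ℕ → ℝ) (hm0 : ∀ j, 0 ≤ m j) (hmS : Summable m) (hm1 : ∑' j, m j = 1)
    (ψ : ℝ → ℝ) (hψLip : ∃ L : NNReal, LipschitzOnWith L ψ (Set.Ici 0))
    (hψanti : AntitoneOn ψ (Set.Ici 0)) (hψ0 : ψ 0 = 1)
    (hψnn : ∀ r, 0 ≤ r → 0 ≤ ψ r)
    (x v : ℕ → ℝ → EuclideanSpace ℝ (Fin d))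
    (hsol : IsICSSolOn d κ α m ψ x v (Set.Ici 0) (Set.Ioi 0))
    (hinit : ∃ C : ℝ, ∀ i, ‖x i 0‖ + ‖v i 0‖ ≤ C)
    (a b : ℝ)
    (ha : a = ⨆ p : ℕ × ℕ, ‖x p.1 0 - x p.2 0‖)
    (hb : b = Real.sqrt (∑ k : Fin d, Dv d v k 0 ^ 2)) :
    ∀ t : ℝ, 0 ≤ t →
      (∀ i j : ℕ, ‖x i t - x j t‖ ≤ a + b * t) ∧
      (∀ i j : ℕ, ψ (a + b * t) ≤ ψ ‖x j t - x i t‖) := by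
  intro t ht
  obtain ⟨C0, hC0⟩ := hinit
  have hC0nn : 0 ≤ C0 := le_trans (by positivity) (hC0 0)
  have hbAk : ∀ k : Fin d, BddAbove (Set.range fun j => v j 0 k) := by
    intro k
    refine ⟨C0, ?_⟩
    rintro y ⟨j, rfl⟩
    have h1 := abs_apply_le_norm (v j 0) k
    have h2 := hC0 j
    have h3 := norm_nonneg (x j 0)
    have := le_abs_self (v j 0 k)
    linarith
  have hbBk : ∀ k : Fin d, BddBelow (Set.range fun j => v j 0 k) := by
    intro k
    refine ⟨-C0, ?_⟩
    rintro y ⟨j, rfl⟩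
    have h1 := abs_apply_le_norm (v j 0) k
    have h2 := hC0 j
    have h3 := norm_nonneg (x j 0)
    have := neg_abs_le (v j 0 k)
    linarith
  have hmax : ∀ (k : Fin d) (s : ℝ), 0 ≤ s → ∀ i, v i s k ≤ Msup d v k 0 :=
    fun k s hs i => maxPrin d κ hκ α hα0 m hm0 hmS hm1 ψ hψanti hψ0 hψnn x v hsol k s hs i
  have hmin : ∀ (k : Fin d) (s : ℝ), 0 ≤ s → ∀ i, minf d v k 0 ≤ v i s k := by
    intro k s hs i
    have hneg := maxPrin d κ hκ α hα0 m hm0 hmS hm1 ψ hψanti hψ0 hψnn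
      (fun i t => -(x i t)) (fun i t => -(v i t)) (isICSSolOn_neg hsol) k s hs i
    simp only [PiLp.neg_apply] at hneg
    -- hneg : -(v i s k) ≤ ⨆ j, -(v j 0 k)
    have hub : (⨆ j, -(v j 0 k)) ≤ -(⨅ j, v j 0 k) := by
      apply ciSup_le
      intro j
      exact neg_le_neg (ciInf_le (hbBk k) j)
    have : -(v i s k) ≤ -(⨅ j, v j 0 k) := le_trans hneg hub
    have h2 := neg_le_neg this
    simpa [minf] using h2
  have hvnorm : ∀ s, 0 ≤ s → ∀ i j, ‖v i s - v j s‖ ≤ b := by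
    intro s hs i j
    rw [hb, EuclideanSpace.norm_eq]
    apply Real.sqrt_le_sqrt
    apply Finset.sum_le_sum
    intro k _
    have h1 := hmax k s hs i
    have h2 := hmin k s hs j
    have h3 := hmax k s hs j
    have h4 := hmin k s hs i
    have hd1 : |v i s k - v j s k| ≤ Dv d v k 0 := by
      rw [abs_le]
      constructor
      · simp only [Dv] at *; linarith
      · simp only [Dv] at *; linarith
    have hDnn : 0 ≤ Dv d v k 0 := le_trans (abs_nonneg _) hd1
    have hsub : ‖(v i s - v j s) k‖ = |v i s k - v j s k| := by
      rw [PiLp.sub_apply, Real.norm_eq_abs]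
    rw [hsub]
    calc |v i s k - v j s k| ^ 2 ≤ (Dv d v k 0) ^ 2 := by nlinarith [abs_nonneg (v i s k - v j s k)]
    _ = Dv d v k 0 ^ 2 := by ring
  have hbnn : 0 ≤ b := hb ▸ Real.sqrt_nonneg _
  have haD : ∀ i j, ‖x i 0 - x j 0‖ ≤ a := by
    intro i j
    rw [ha]
    have hb2 : BddAbove (Set.range fun p : ℕ × ℕ => ‖x p.1 0 - x p.2 0‖) := by
      refine ⟨2*C0, ?_⟩
      rintro y ⟨p, rfl⟩
      calc ‖x p.1 0 - x p.2 0‖ ≤ ‖x p.1 0‖ + ‖x p.2 0‖ := norm_sub_le _ _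
      _ ≤ 2*C0 := by
          have h1 := hC0 p.1; have h2 := hC0 p.2
          have h3 := norm_nonneg (v p.1 0); have h4 := norm_nonneg (v p.2 0)
          linarith
    exact le_ciSup hb2 (i, j)
  have h0a : 0 ≤ a := by
    have := haD 0 0
    simpa using this
  have hx : ∀ i j, ‖x i t - x j t‖ ≤ a + b * t := by
    intro i j
    rcases eq_or_lt_of_le ht with rfl | htpos
    · simpa using le_trans (haD i j) (by linarith)
    · have key : ∀ s, 0 < s → s ≤ t → ‖(x i t - x j t) - (x i s - x j s)‖ ≤ b * (t - s) := by
        intro s hs hst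
        have hmvt := Convex.norm_image_sub_le_of_norm_hasDerivWithin_le
          (f := fun r => x i r - x j r) (f' := fun r => v i r - v j r) (s := Set.Icc s t) (C := b)
          (fun r hr => (((hsol.2.2.2 i r (lt_of_lt_of_le hs hr.1)).1).sub
            ((hsol.2.2.2 j r (lt_of_lt_of_le hs hr.1)).1)).hasDerivWithinAt)
          (fun r hr => hvnorm r (le_trans hs.le hr.1) i j)
          (convex_Icc s t) (Set.left_mem_Icc.2 hst) (Set.right_mem_Icc.2 hst)
        rw [Real.norm_eq_abs, abs_of_nonneg (by linarith : (0:ℝ) ≤ t - s)] at hmvt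
        exact hmvt
      have hlim : Tendsto (fun s => (x i t - x j t) - (x i s - x j s)) (𝓝[>] (0:ℝ))
          (𝓝 ((x i t - x j t) - (x i 0 - x j 0))) := by
        have hxi : Tendsto (x i) (𝓝[>] (0:ℝ)) (𝓝 (x i 0)) :=
          ((hsol.2.1 i).continuousWithinAt Set.self_mem_Ici).tendsto.mono_left
            (nhdsWithin_mono 0 Set.Ioi_subset_Ici_self)
        have hxj : Tendsto (x j) (𝓝[>] (0:ℝ)) (𝓝 (x j 0)) :=
          ((hsol.2.1 j).continuousWithinAt Set.self_mem_Ici).tendsto.mono_left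
            (nhdsWithin_mono 0 Set.Ioi_subset_Ici_self)
        exact tendsto_const_nhds.sub (hxi.sub hxj)
      have h2 : ‖(x i t - x j t) - (x i 0 - x j 0)‖ ≤ b * t := by
        apply le_of_tendsto hlim.norm
        filter_upwards [Ioo_mem_nhdsGT_of_mem (Set.left_mem_Ico.2 htpos)] with s hs
        calc ‖(x i t - x j t) - (x i s - x j s)‖ ≤ b * (t - s) := key s hs.1 hs.2.le
        _ ≤ b * t := by nlinarith [hs.1]
      calc ‖x i t - x j t‖
          = ‖((x i t - x j t) - (x i 0 - x j 0)) + (x i 0 - x j 0)‖ := by abel_nf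
        _ ≤ ‖(x i t - x j t) - (x i 0 - x j 0)‖ + ‖x i 0 - x j 0‖ := norm_add_le _ _
        _ ≤ b * t + a := add_le_add h2 (haD i j)
        _ = a + b * t := by ring
  refine ⟨hx, fun i j => ?_⟩
  exact hψanti (Set.mem_Ici.2 (norm_nonneg _))
    (Set.mem_Ici.2 (by nlinarith)) (hx j i)
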